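/- Let a < b be reals, let α : [a,b] → (0,∞) be continuously differentiable, and let w : [a,b] → ℝ be twice differentiable with w''(t) + α(t)² w(t) = 0 for all t ∈ [a,b]. Define E(t) := w(t)² + (w'(t)/α(t))². Then E'(t) = −2 (α'(t)/α(t)) (w'(t)/α(t))², and consequently for all t₁, t₂ ∈ [a,b] with t₁ ≤ t₂, E(t₂) ≤ E(t₁)·exp( 2∫_{t₁}^{t₂} |α'(s)|/α(s) ds ) and E(t₁) ≤ E(t₂)·exp( 2∫_{t₁}^{t₂} |α'(s)|/α(s) ds ). -/

import Mathlib

open Set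

noncomputable section

/-- the Gronwall-type two-sided comparability of the modified amplitude
`E = w² + (w'/α)²` for solutions of `w'' + α²w = 0`. -/
theorem stmt12 (a b : ℝ) (hab : a < b)
    (α α' : ℝ → ℝ)
    (hα : ∀ t ∈ Set.Icc a b, HasDerivAt α (α' t) t)
    (hα' : ContinuousOn α' (Set.Icc a b))
    (hαpos : ∀ t ∈ Set.Icc a b, 0 < α t)
    (w w' w'' : ℝ → ℝ)
    (hw : ∀ t ∈ Set.Icc a b, HasDerivAt w (w' t) t)
    (hw' : ∀ t ∈ Set.Icc a b, HasDerivAt w' (w'' t) t)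
    (heq : ∀ t ∈ Set.Icc a b, w'' t + α t ^ 2 * w t = 0) :
    (∀ t ∈ Set.Icc a b,
      HasDerivAt (fun t => w t ^ 2 + (w' t / α t) ^ 2)
        (-2 * (α' t / α t) * (w' t / α t) ^ 2) t) ∧
    (∀ t₁ ∈ Set.Icc a b, ∀ t₂ ∈ Set.Icc a b, t₁ ≤ t₂ →
      (w t₂ ^ 2 + (w' t₂ / α t₂) ^ 2) ≤
        (w t₁ ^ 2 + (w' t₁ / α t₁) ^ 2) *
          Real.exp (2 * ∫ s in t₁..t₂, |α' s| / α s) ∧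
      (w t₁ ^ 2 + (w' t₁ / α t₁) ^ 2) ≤
        (w t₂ ^ 2 + (w' t₂ / α t₂) ^ 2) *
          Real.exp (2 * ∫ s in t₁..t₂, |α' s| / α s)) := by
  set E : ℝ → ℝ := fun t => w t ^ 2 + (w' t / α t) ^ 2 with hEdef
  set E' : ℝ → ℝ := fun t => -2 * (α' t / α t) * (w' t / α t) ^ 2 with hE'def
  -- the derivative computation
  have hE : ∀ t ∈ Set.Icc a b, HasDerivAt E (E' t) t := by
    intro t ht
    have hα0 : α t ≠ 0 := (hαpos t ht).ne'
    have h1 : HasDerivAt (fun t => w t ^ 2) (2 * w t * w' t) t := by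
      simpa using (hw t ht).fun_pow 2
    have h2 : HasDerivAt (fun t => w' t / α t)
        ((w'' t * α t - w' t * α' t) / α t ^ 2) t := (hw' t ht).div (hα t ht) hα0
    have h3 : HasDerivAt (fun t => (w' t / α t) ^ 2)
        (2 * (w' t / α t) * ((w'' t * α t - w' t * α' t) / α t ^ 2)) t := by
      simpa using h2.fun_pow 2
    have h4 := h1.fun_add h3
    have hw''t : w'' t = -(α t ^ 2 * w t) := by
      have := heq t ht; linarith
    refine h4.congr_deriv ?_
    rw [hE'def, hw''t]
    field_simp
    ring
  refine ⟨hE, ?_⟩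
  intro t₁ ht₁ t₂ ht₂ h12
  set g : ℝ → ℝ := fun s => |α' s| / α s with hgdef
  have hαcont : ContinuousOn α (Set.Icc a b) := fun t ht =>
    (hα t ht).continuousAt.continuousWithinAt
  have hgcont : ContinuousOn g (Set.Icc a b) :=
    hα'.abs.div hαcont (fun t ht => (hαpos t ht).ne')
  have hsub : Set.Icc t₁ t₂ ⊆ Set.Icc a b := Set.Icc_subset_Icc ht₁.1 ht₂.2
  have hsub' : Set.Ioo t₁ t₂ ⊆ Set.Ioo a b := Set.Ioo_subset_Ioo ht₁.1 ht₂.2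
  set F : ℝ → ℝ := fun t => ∫ s in t₁..t, g s with hFdef
  have hgint : ∀ u ∈ Set.Icc a b, ∀ v ∈ Set.Icc a b, IntervalIntegrable g MeasureTheory.volume u v := by
    intro u hu v hv
    apply ContinuousOn.intervalIntegrable
    exact hgcont.mono (Set.uIcc_subset_Icc hu hv)
  -- derivative of F at interior points
  have hF : ∀ x ∈ Set.Ioo a b, HasDerivAt F (g x) x := by
    intro x hx
    have hxm : x ∈ Set.Icc a b := Set.Ioo_subset_Icc_self hx
    refine intervalIntegral.integral_hasDerivAt_right (hgint t₁ ht₁ x hxm) ?_ ?_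
    · exact (hgcont.mono Set.Ioo_subset_Icc_self).stronglyMeasurableAtFilter isOpen_Ioo x hx
    · exact hgcont.continuousAt (Icc_mem_nhds hx.1 hx.2)
  -- continuity of F on Icc a b
  have huIcc : Set.uIcc a b = Set.Icc a b := Set.uIcc_of_le hab.le
  have hFcont : ContinuousOn F (Set.Icc a b) := by
    have h := intervalIntegral.continuousOn_primitive_interval'
      (hgint a (Set.left_mem_Icc.2 hab.le) b (Set.right_mem_Icc.2 hab.le))
      (by rw [huIcc]; exact ht₁)
    rwa [huIcc] at h
  have hEcont : ContinuousOn E (Set.Icc a b) := fun t ht =>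
    (hE t ht).continuousAt.continuousWithinAt
  have hEnn : ∀ t, 0 ≤ E t := fun t => by positivity
  -- the key derivative sign facts
  have key : ∀ (c : ℝ), c = 1 ∨ c = -1 → ∀ x ∈ Set.Ioo a b,
      HasDerivAt (fun t => E t * Real.exp (c * (2 * F t)))
        ((E' x + c * (2 * g x) * E x) * Real.exp (c * (2 * F x))) x := by
    intro c _ x hx
    have hxm : x ∈ Set.Icc a b := Set.Ioo_subset_Icc_self hx
    have hexp : HasDerivAt (fun t => Real.exp (c * (2 * F t)))
        (Real.exp (c * (2 * F x)) * (c * (2 * g x))) x := by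
      have := ((hF x hx).const_mul 2).const_mul c
      exact (Real.hasDerivAt_exp _).comp x (by simpa [mul_comm, mul_assoc] using this)
    have := (hE x hxm).fun_mul hexp
    refine this.congr_deriv ?_
    ring
  have hderiv_bound : ∀ x ∈ Set.Ioo a b,
      0 ≤ E' x + 2 * g x * E x ∧ E' x - 2 * g x * E x ≤ 0 := by
    intro x hx
    have hxm : x ∈ Set.Icc a b := Set.Ioo_subset_Icc_self hx
    have hαx : 0 < α x := hαpos x hxm
    have habs : α' x ≤ |α' x| := le_abs_self _
    have habs' : -α' x ≤ |α' x| := neg_le_abs _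
    have hq : (0:ℝ) ≤ (w' x / α x) ^ 2 := sq_nonneg _
    have hw2 : (0:ℝ) ≤ w x ^ 2 := sq_nonneg _
    have hinv : (0:ℝ) < 1 / α x := by positivity
    constructor
    · have : 0 ≤ (1 / α x) * ((-2 * α' x) * (w' x / α x) ^ 2
          + 2 * |α' x| * (w x ^ 2 + (w' x / α x) ^ 2)) := by
        apply mul_nonneg hinv.le
        nlinarith
      calc (0:ℝ) ≤ _ := this
        _ = E' x + 2 * g x * E x := by
            simp only [hE'def, hgdef, hEdef]
            field_simp
    · have : (1 / α x) * ((-2 * α' x) * (w' x / α x) ^ 2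
          - 2 * |α' x| * (w x ^ 2 + (w' x / α x) ^ 2)) ≤ 0 := by
        apply mul_nonpos_of_nonneg_of_nonpos hinv.le
        nlinarith
      calc E' x - 2 * g x * E x
          = (1 / α x) * ((-2 * α' x) * (w' x / α x) ^ 2
            - 2 * |α' x| * (w x ^ 2 + (w' x / α x) ^ 2)) := by
            simp only [hE'def, hgdef, hEdef]
            field_simp
        _ ≤ 0 := this
  have hFt₁ : F t₁ = 0 := intervalIntegral.integral_same
  -- monotone part : E t₁ ≤ E t₂ * exp (2 * F t₂)
  have hcont1 : ∀ c : ℝ, ContinuousOn (fun t => E t * Real.exp (c * (2 * F t))) (Set.Icc t₁ t₂) := by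
    intro c
    apply (hEcont.mono hsub).mul
    apply Real.continuous_exp.comp_continuousOn
    exact continuousOn_const.mul (continuousOn_const.mul (hFcont.mono hsub))
  have hmem12 : t₁ ∈ Set.Icc t₁ t₂ := Set.left_mem_Icc.2 h12
  have hmem12' : t₂ ∈ Set.Icc t₁ t₂ := Set.right_mem_Icc.2 h12
  have hintIcc : interior (Set.Icc t₁ t₂) ⊆ Set.Ioo a b := by
    rw [interior_Icc]; exact hsub'
  -- monotone: weight exp(+2F)
  have hM : MonotoneOn (fun t => E t * Real.exp (1 * (2 * F t))) (Set.Icc t₁ t₂) := by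
    apply monotoneOn_of_deriv_nonneg (convex_Icc t₁ t₂) (hcont1 1)
    · intro x hx
      exact (key 1 (Or.inl rfl) x (hintIcc hx)).differentiableAt.differentiableWithinAt
    · intro x hx
      rw [(key 1 (Or.inl rfl) x (hintIcc hx)).deriv]
      have h1 := (hderiv_bound x (hintIcc hx)).1
      have he : (0:ℝ) ≤ Real.exp (1 * (2 * F x)) := (Real.exp_pos _).le
      exact mul_nonneg (by linarith) he
  have hA : AntitoneOn (fun t => E t * Real.exp (-1 * (2 * F t))) (Set.Icc t₁ t₂) := by
    apply antitoneOn_of_deriv_nonpos (convex_Icc t₁ t₂) (hcont1 (-1))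
    · intro x hx
      exact (key (-1) (Or.inr rfl) x (hintIcc hx)).differentiableAt.differentiableWithinAt
    · intro x hx
      rw [(key (-1) (Or.inr rfl) x (hintIcc hx)).deriv]
      have h2 := (hderiv_bound x (hintIcc hx)).2
      have he : (0:ℝ) ≤ Real.exp (-1 * (2 * F x)) := (Real.exp_pos _).le
      exact mul_nonpos_of_nonpos_of_nonneg (by linarith) he
  have hFt₂ : F t₂ = ∫ s in t₁..t₂, |α' s| / α s := rfl
  have hMle := hM hmem12 hmem12' h12
  have hAle := hA hmem12 hmem12' h12
  simp only [hFt₁, mul_zero, Real.exp_zero, mul_one, one_mul] at hMle hAle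
  constructor
  · -- E t₂ ≤ E t₁ * exp(2I)
    have hAle' : E t₂ * Real.exp (-(2 * F t₂)) ≤ E t₁ := by
      simpa using hAle
    have := mul_le_mul_of_nonneg_right hAle' (Real.exp_pos (2 * F t₂)).le
    rw [mul_assoc, ← Real.exp_add, neg_add_cancel, Real.exp_zero, mul_one] at this
    simpa [hFt₂] using this
  · simpa [hFt₂] using hMle
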